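/- Let Π be a trace assignment over traces that are all of the form x·y^ω with |x| + |y| ≤ k. Then for every quantifier-free LTL-style formula ψ (over finitely many trace variables, using X, U, Boolean connectives), the set of positions j at which the shifted assignment Π[j,∞) satisfies ψ is eventually periodic with period dividing k! and threshold k; in particular, ψ is satisfied at some position iff it is satisfied at some position j < k + k!. -/
import Mathlib


/-- The trace determined by prefix `x` and period `y` (read `x·y^ω`). -/
def isLasso {AP : Type*} (t : ℕ → Set AP) (x y : List (Set AP)) : Prop :=
  ∀ n, t n = if n < x.length then x.getD n ∅ else y.getD ((n - x.length) % y.length) ∅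

/-- Quantifier-free HyperLTL formulas with atoms `a_π` (`a : α`, `π : V`). -/
inductive QF (α V : Type*)
  | atom : α → V → QF α V
  | neg : QF α V → QF α V
  | or : QF α V → QF α V → QF α V
  | next : QF α V → QF α V
  | until_ : QF α V → QF α V → QF α V

/-- Shift a trace assignment by `j`. -/
def shiftA {V β : Type*} (A : V → ℕ → Set β) (j : ℕ) : V → ℕ → Set β :=
  fun v n => A v (n + j)

/-- Semantics of quantifier-free formulas under a trace assignment. -/
def QF.sat {α V : Type*} (A : V → ℕ → Set α) : QF α V → Prop
  | atom a π => a ∈ A π 0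
  | neg φ => ¬ φ.sat A
  | or φ ψ => φ.sat A ∨ ψ.sat A
  | next φ => φ.sat (shiftA A 1)
  | until_ φ ψ => ∃ j : ℕ, ψ.sat (shiftA A j) ∧ ∀ j' < j, φ.sat (shiftA A j')

/-- If every trace in the range of the assignment `A` is of the form `x·y^ω` with
`|x| + |y| ≤ k`, then for any quantifier-free formula `ψ` the set of positions at
which `ψ` is satisfied is eventually periodic with period dividing `k!` and
threshold `k`; in particular `ψ` holds at some position iff it holds at some
position `j < k + k!`. -/
theorem qf_sat_eventually_periodic {α V : Type*} (k : ℕ) (A : V → ℕ → Set α)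
    (hA : ∀ v : V, ∃ x y : List (Set α), y ≠ [] ∧ x.length + y.length ≤ k ∧
      isLasso (A v) x y)
    (ψ : QF α V) :
    (∀ j, k ≤ j → (ψ.sat (shiftA A (j + Nat.factorial k)) ↔ ψ.sat (shiftA A j))) ∧
    ((∃ j, ψ.sat (shiftA A j)) ↔ ∃ j < k + Nat.factorial k, ψ.sat (shiftA A j)) := by
  have hper : ∀ v : V, ∀ m, k ≤ m → A v (m + Nat.factorial k) = A v m := by
    intro v m hm
    obtain ⟨x, y, hy, hlen, hl⟩ := hA v
    have hypos : 0 < y.length := List.length_pos_iff.mpr hy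
    have hdvd : y.length ∣ Nat.factorial k :=
      Nat.dvd_factorial hypos (le_trans (Nat.le_add_left _ _) hlen)
    have hxm : x.length ≤ m := le_trans (le_trans (Nat.le_add_right _ _) hlen) hm
    rw [hl m, hl (m + Nat.factorial k)]
    rw [if_neg (by omega), if_neg (by omega)]
    congr 1
    have : m + Nat.factorial k - x.length = (m - x.length) + Nat.factorial k := by omega
    obtain ⟨c, hc⟩ := hdvd
    rw [this, hc, Nat.add_mul_mod_self_left]
  have hshift : ∀ j, k ≤ j → shiftA A (j + Nat.factorial k) = shiftA A j := by
    intro j hj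
    funext v n
    show A v (n + (j + Nat.factorial k)) = A v (n + j)
    rw [← Nat.add_assoc]
    exact hper v (n + j) (by omega)
  refine ⟨fun j hj => by rw [hshift j hj], ?_⟩
  constructor
  · rintro ⟨j, hsat⟩
    induction j using Nat.strong_induction_on with
    | _ j ih =>
      by_cases h : j < k + Nat.factorial k
      · exact ⟨j, h, hsat⟩
      · have hfac : 0 < Nat.factorial k := Nat.factorial_pos k
        have hj' : k ≤ j - Nat.factorial k := by omega
        have : j - Nat.factorial k + Nat.factorial k = j := by omega
        exact ih (j - Nat.factorial k) (by omega) (by rw [← hshift _ hj', this]; exact hsat)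
  · rintro ⟨j, _, hsat⟩; exact ⟨j, hsat⟩
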